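/- Let K be an O-category with strict morphisms and initial object ⊥, let F : K → K be locally continuous, and let κ : Φ ⇒ A be an O-colimit of the chain Φ : ⊥ → F⊥ → F²⊥ → ⋯ (with first link the unique morphism ⊥ → F⊥). Then (A, fold) with fold = ⊔_n κ_{n+1} ∘ F(κ_n^p) is an initial F-algebra: for every F-algebra (B, b : F B → B), the morphism φ = ⊔_n β_n ∘ κ_n^p, where β₀ = ⊥_B and β_{n+1} = b ∘ F β_n, is the unique morphism A → B with φ ∘ fold = b ∘ F φ. -/

import Mathlib

open CategoryTheory OmegaCompletePartialOrder

universe v u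

class OHom (K : Type u) [Category.{v} K] where
  homOrder : ∀ X Y : K, OmegaCompletePartialOrder (X ⟶ Y)

attribute [instance] OHom.homOrder

/-- An O-category: a category enriched in dcpos with continuous composition. -/
class OCat (K : Type u) [Category.{v} K] extends OHom K where
  comp_mono : ∀ {X Y Z : K} {f f' : X ⟶ Y} {g g' : Y ⟶ Z},
    f ≤ f' → g ≤ g' → f ≫ g ≤ f' ≫ g'
  comp_cont_left : ∀ {X Y Z : K} (g : Y ⟶ Z) (c : Chain (X ⟶ Y))
    (hm : Monotone fun n => c n ≫ g),
    ωSup c ≫ g = ωSup ⟨fun n => c n ≫ g, hm⟩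
  comp_cont_right : ∀ {X Y Z : K} (f : X ⟶ Y) (c : Chain (Y ⟶ Z))
    (hm : Monotone fun n => f ≫ c n),
    f ≫ ωSup c = ωSup ⟨fun n => f ≫ c n, hm⟩

/-- Iterated application of an endofunctor to an object: `pob F X n = Fⁿ X`. -/
def pob {K : Type u} [Category.{v} K] (F : K ⥤ K) (X : K) : ℕ → K
  | 0 => X
  | n + 1 => F.obj (pob F X n)

/-- The links `Fⁿ k : Fⁿ X ⟶ Fⁿ⁺¹ X` of the ω-chain generated by a first link
`k : X ⟶ F X`. -/
def plink {K : Type u} [Category.{v} K] (F : K ⥤ K) {X : K} (k : X ⟶ F.obj X) :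
    ∀ n, pob F X n ⟶ pob F X (n + 1)
  | 0 => k
  | n + 1 => F.map (plink F k n)

/-- Composite of links from `n` to `n + m`. -/
def plComp {K : Type u} [Category.{v} K] (F : K ⥤ K) {X : K} (k : X ⟶ F.obj X) :
    ∀ n m, pob F X n ⟶ pob F X (n + m)
  | _, 0 => 𝟙 _
  | n, m + 1 => plComp F k n m ≫ plink F k (n + m)

theorem ωSup_eventually_const {α : Type*} [OmegaCompletePartialOrder α]
    (c : Chain α) (x : α) (n : ℕ) (h : ∀ m, c (n + m) = x) : ωSup c = x :=
  le_antisymm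
    (ωSup_le _ _ fun m => (c.monotone (Nat.le_add_left m n)).trans_eq (h m))
    ((h 0).symm.trans_le (le_ωSup c n))

/-- In an O-category with strict morphisms and initial object ⊥, for a
locally continuous F and an O-colimit κ : Φ ⇒ A of the chain ⊥ ⟶ F⊥ ⟶ F²⊥ ⟶ ⋯,
(A, fold) is an initial F-algebra: for every F-algebra (B, b), the morphism
φ = ⊔ₙ β_n ∘ κ_n^p (with β₀ = ⊥_B, β_{n+1} = b ∘ F β_n) is the unique morphism
with φ ∘ fold = b ∘ F φ. -/
theorem initial_algebra {K : Type u} [Category.{v} K] [OCat K]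
    (bot : K) (ι : ∀ A : K, bot ⟶ A) (hinit : ∀ (A : K) (f : bot ⟶ A), f = ι A)
    (z : ∀ X Y : K, X ⟶ Y)
    (hz₁ : ∀ {X Y Z : K} (f : X ⟶ Y), f ≫ z Y Z = z X Z)
    (hz₂ : ∀ {X Y Z : K} (g : Y ⟶ Z), z X Y ≫ g = z X Z)
    (hstrict : ∀ {X Y : K} (f : X ⟶ Y), z X Y ≤ f)
    (F : K ⥤ K)
    (hFmono : ∀ {X Y : K} {f g : X ⟶ Y}, f ≤ g → F.map f ≤ F.map g)
    (hFcont : ∀ {X Y : K} (c : Chain (X ⟶ Y))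
      (hm : Monotone fun n => F.map (c n)),
      F.map (ωSup c) = ωSup ⟨fun n => F.map (c n), hm⟩)
    (A : K) (κ : ∀ n, pob F bot n ⟶ A) (κp : ∀ n, A ⟶ pob F bot n)
    (hcocone : ∀ n, plink F (ι (F.obj bot)) n ≫ κ (n + 1) = κ n)
    (hκ₁ : ∀ n, κ n ≫ κp n = 𝟙 (pob F bot n)) (hκ₂ : ∀ n, κp n ≫ κ n ≤ 𝟙 A)
    (hκmono : Monotone fun n => κp n ≫ κ n)
    (hκsup : ωSup ⟨fun n => κp n ≫ κ n, hκmono⟩ = 𝟙 A)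
    (B : K) (b : F.obj B ⟶ B)
    (β : ∀ n, pob F bot n ⟶ B)
    (hβ₀ : β 0 = ι B) (hβs : ∀ n, β (n + 1) = F.map (β n) ≫ b) :
    ∀ (hf : Monotone fun n => F.map (κp n) ≫ κ (n + 1))
      (hφ : Monotone fun n => κp n ≫ β n),
      (ωSup ⟨fun n => F.map (κp n) ≫ κ (n + 1), hf⟩ ≫ ωSup ⟨fun n => κp n ≫ β n, hφ⟩
          = F.map (ωSup ⟨fun n => κp n ≫ β n, hφ⟩) ≫ b) ∧
      (∀ ψ : A ⟶ B,
        ωSup ⟨fun n => F.map (κp n) ≫ κ (n + 1), hf⟩ ≫ ψ = F.map ψ ≫ b →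
        ψ = ωSup ⟨fun n => κp n ≫ β n, hφ⟩) := by
  intro hf hφ
  set k := ι (F.obj bot)
  -- β is a cocone over the chain
  have hβc : ∀ n, plink F k n ≫ β (n + 1) = β n := by
    intro n
    induction n with
    | zero => rw [hβ₀]; exact hinit B _
    | succ n ih =>
      show F.map (plink F k n) ≫ β (n + 2) = β (n + 1)
      rw [hβs (n + 1), ← Category.assoc, ← F.map_comp, ih, hβs n]
  have hplκ : ∀ n m, plComp F k n m ≫ κ (n + m) = κ n := by
    intro n m
    induction m with
    | zero => exact Category.id_comp _
    | succ m ih =>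
      show (plComp F k n m ≫ plink F k (n + m)) ≫ κ (n + m + 1) = κ n
      rw [Category.assoc, hcocone (n + m), ih]
  have hplβ : ∀ n m, plComp F k n m ≫ β (n + m) = β n := by
    intro n m
    induction m with
    | zero => exact Category.id_comp _
    | succ m ih =>
      show (plComp F k n m ≫ plink F k (n + m)) ≫ β (n + m + 1) = β n
      rw [Category.assoc, hβc (n + m), ih]
  have hκκp : ∀ n m, κ n ≫ κp (n + m) = plComp F k n m := by
    intro n m
    rw [← hplκ n m, Category.assoc, hκ₁ (n + m), Category.comp_id]
  have hFpl : ∀ n m, F.map (plComp F k n m) ≫ κ (n + m + 1) = κ (n + 1) := by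
    intro n m
    induction m with
    | zero => show F.map (𝟙 _) ≫ κ (n + 1) = κ (n + 1); erw [F.map_id, Category.id_comp]
    | succ m ih =>
      show F.map (plComp F k n m ≫ plink F k (n + m)) ≫ κ (n + m + 2) = κ (n + 1)
      erw [F.map_comp, Category.assoc]
      have : F.map (plink F k (n + m)) ≫ κ (n + m + 2) = κ (n + m + 1) :=
        hcocone (n + m + 1)
      rw [this, ih]
  -- κ n ≫ φ = β n
  have hκφ : ∀ n, κ n ≫ ωSup ⟨fun n => κp n ≫ β n, hφ⟩ = β n := by
    intro n
    have hm : Monotone fun m => κ n ≫ (κp m ≫ β m) :=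
      fun i j h => OCat.comp_mono le_rfl (hφ h)
    rw [OCat.comp_cont_right (κ n) ⟨fun n => κp n ≫ β n, hφ⟩ hm]
    refine ωSup_eventually_const _ _ n fun m => ?_
    show κ n ≫ κp (n + m) ≫ β (n + m) = β n
    rw [← Category.assoc, hκκp n m, hplβ n m]
  -- F (κ n) ≫ fold = κ (n+1)
  have hκfold : ∀ n,
      F.map (κ n) ≫ ωSup ⟨fun n => F.map (κp n) ≫ κ (n + 1), hf⟩ = κ (n + 1) := by
    intro n
    have hm : Monotone fun m => F.map (κ n) ≫ (F.map (κp m) ≫ κ (m + 1)) :=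
      fun i j h => OCat.comp_mono le_rfl (hf h)
    rw [OCat.comp_cont_right (F.map (κ n)) ⟨fun n => F.map (κp n) ≫ κ (n + 1), hf⟩ hm]
    refine ωSup_eventually_const _ _ n fun m => ?_
    show F.map (κ n) ≫ F.map (κp (n + m)) ≫ κ (n + m + 1) = κ (n + 1)
    erw [← Category.assoc, ← F.map_comp, hκκp n m, hFpl n m]
  constructor
  · -- the algebra homomorphism equation
    have m1 : Monotone fun n => (F.map (κp n) ≫ κ (n + 1)) ≫
        ωSup ⟨fun n => κp n ≫ β n, hφ⟩ := fun i j h => OCat.comp_mono (hf h) le_rfl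
    have m2 : Monotone fun n => F.map (κp n ≫ β n) := fun i j h => hFmono (hφ h)
    have m3 : Monotone fun n => F.map (κp n ≫ β n) ≫ b :=
      fun i j h => OCat.comp_mono (m2 h) le_rfl
    have hL : ωSup ⟨fun n => F.map (κp n) ≫ κ (n + 1), hf⟩ ≫
        ωSup ⟨fun n => κp n ≫ β n, hφ⟩ =
        ωSup ⟨fun n => (F.map (κp n) ≫ κ (n + 1)) ≫
          ωSup ⟨fun n => κp n ≫ β n, hφ⟩, m1⟩ :=
      OCat.comp_cont_left _ _ m1
    have hR1 : F.map (ωSup ⟨fun n => κp n ≫ β n, hφ⟩) =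
        ωSup ⟨fun n => F.map (κp n ≫ β n), m2⟩ :=
      hFcont ⟨fun n => κp n ≫ β n, hφ⟩ m2
    have hR2 : ωSup ⟨fun n => F.map (κp n ≫ β n), m2⟩ ≫ b =
        ωSup ⟨fun n => F.map (κp n ≫ β n) ≫ b, m3⟩ :=
      OCat.comp_cont_left b _ m3
    rw [hL, hR1, hR2]
    refine congrArg ωSup (Chain.ext (funext fun n => ?_))
    show (F.map (κp n) ≫ κ (n + 1)) ≫ ωSup ⟨fun n => κp n ≫ β n, hφ⟩
        = F.map (κp n ≫ β n) ≫ b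
    erw [Category.assoc, hκφ (n + 1), F.map_comp, Category.assoc, ← hβs n]
  · intro ψ hψ
    have hκψ : ∀ n, κ n ≫ ψ = β n := by
      intro n
      induction n with
      | zero => rw [hβ₀]; exact hinit B _
      | succ n ih =>
        erw [← hκfold n, Category.assoc, hψ, ← Category.assoc, ← F.map_comp, ih, hβs n]; rfl
    have m4 : Monotone fun n => (κp n ≫ κ n) ≫ ψ :=
      fun i j h => OCat.comp_mono (hκmono h) le_rfl
    calc ψ = 𝟙 A ≫ ψ := (Category.id_comp ψ).symm
      _ = ωSup ⟨fun n => κp n ≫ κ n, hκmono⟩ ≫ ψ := by rw [hκsup]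
      _ = ωSup ⟨fun n => (κp n ≫ κ n) ≫ ψ, m4⟩ :=
        OCat.comp_cont_left ψ ⟨fun n => κp n ≫ κ n, hκmono⟩ m4
      _ = ωSup ⟨fun n => κp n ≫ β n, hφ⟩ :=
        congrArg ωSup (Chain.ext (funext fun n => by
          show (κp n ≫ κ n) ≫ ψ = κp n ≫ β n
          rw [Category.assoc, hκψ n]))
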